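/- Let x0 be a Pareto critical point with a strictly positive KKT multiplier, suppose rank(Df(x0)) = k-1, f is three times continuously differentiable, and D_x F-tilde(x0, alpha0) is invertible for the (unique) alpha0 in A(x0). Then the tangent cone Tan(P_int, x0) is contained in pr_x(T_{(x0,alpha0)} M), i.e. every tangent direction to P_int at x0 is the projection of a tangent vector of the extended manifold M. -/

import Mathlib

noncomputable def grad (n : ℕ) (g : (Fin n → ℝ) → ℝ) (x : Fin n → ℝ) : Fin n → ℝ :=
  fun j => fderiv ℝ g x (Pi.single j 1)

noncomputable def Ftilde (n K : ℕ) (f : Fin (K + 1) → (Fin n → ℝ) → ℝ)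
    (p : (Fin n → ℝ) × (Fin K → ℝ)) : Fin n → ℝ :=
  (∑ i : Fin K, p.2 i •
      (grad n (f i.castSucc) p.1 - grad n (f (Fin.last K)) p.1))
    + grad n (f (Fin.last K)) p.1

def openSimplex (K : ℕ) : Set (Fin K → ℝ) := {α | (∀ i, 0 < α i) ∧ ∑ i, α i < 1}

noncomputable def DxFtilde (n K : ℕ) (f : Fin (K + 1) → (Fin n → ℝ) → ℝ)
    (p : (Fin n → ℝ) × (Fin K → ℝ)) : (Fin n → ℝ) →L[ℝ] (Fin n → ℝ) :=
  fderiv ℝ (fun x => Ftilde n K f (x, p.2)) p.1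

def ParetoCriticalInt (n K : ℕ) (f : Fin (K + 1) → (Fin n → ℝ) → ℝ) : Set (Fin n → ℝ) :=
  {x | ∃ α ∈ openSimplex K, Ftilde n K f (x, α) = 0}

noncomputable def Jac (n k : ℕ) (f : Fin k → (Fin n → ℝ) → ℝ) (x : Fin n → ℝ) :
    Matrix (Fin k) (Fin n) ℝ :=
  Matrix.of fun i j => fderiv ℝ (f i) x (Pi.single j 1)

def Tan {E : Type*} [NormedAddCommGroup E] [NormedSpace ℝ E] (Y : Set E) (x : E) :
    Set E :=
  {v | v = 0 ∨ ∃ u : ℕ → E, (∀ i, u i ≠ 0) ∧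
    Filter.Tendsto u Filter.atTop (nhds 0) ∧ (∀ i, x + u i ∈ Y) ∧
    Filter.Tendsto (fun i => ‖u i‖⁻¹ • u i) Filter.atTop (nhds (‖v‖⁻¹ • v))}

/-! ### Auxiliary lemmas -/

section aux
variable {n K : ℕ} {f : Fin (K + 1) → (Fin n → ℝ) → ℝ} {x₀ : Fin n → ℝ} {α₀ : Fin K → ℝ}

lemma contDiff_grad (g : (Fin n → ℝ) → ℝ) (hg : ContDiff ℝ 3 g) :
    ContDiff ℝ 2 (grad n g) := by
  apply contDiff_pi.mpr
  intro j
  exact (hg.fderiv_right (by norm_num)).clm_apply contDiff_const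

lemma contDiff_Ftilde (hf : ∀ i, ContDiff ℝ 3 (f i)) : ContDiff ℝ 1 (Ftilde n K f) := by
  unfold Ftilde
  apply ContDiff.add
  · apply ContDiff.sum; intro i _
    exact ContDiff.smul (contDiff_pi.mp contDiff_snd i : ContDiff ℝ 1 fun p : (Fin n → ℝ) × (Fin K → ℝ) => p.2 i)
      ((((contDiff_grad _ (hf _)).sub (contDiff_grad _ (hf _))).of_le (by norm_num)).comp
        contDiff_fst)
  · exact (((contDiff_grad _ (hf _)).of_le (by norm_num)).comp contDiff_fst)

noncomputable def Tmap (d : Fin K → Fin n → ℝ) : (Fin K → ℝ) →L[ℝ] (Fin n → ℝ) :=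
  ∑ i, (ContinuousLinearMap.proj i : (Fin K → ℝ) →L[ℝ] ℝ).smulRight (d i)

lemma Tmap_apply (d : Fin K → Fin n → ℝ) (w : Fin K → ℝ) :
    Tmap d w = ∑ i, w i • d i := by
  simp [Tmap, ContinuousLinearMap.sum_apply]

lemma hasFDerivAt_affine (d : Fin K → Fin n → ℝ) (g : Fin n → ℝ) (α : Fin K → ℝ) :
    HasFDerivAt (fun β : Fin K → ℝ => (∑ i, β i • d i) + g) (Tmap d) α := by
  apply HasFDerivAt.add_const
  exact HasFDerivAt.fun_sum fun i _ =>
    ((ContinuousLinearMap.proj i : (Fin K → ℝ) →L[ℝ] ℝ).smulRight (d i)).hasFDerivAt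

lemma Vapply (β : Fin (K+1) → ℝ) :
    (Jac n (K+1) f x₀).transpose.mulVecLin β = ∑ i, β i • grad n (f i) x₀ := by
  funext j
  simp [Matrix.mulVecLin_apply, Matrix.mulVec, Matrix.vecMul, dotProduct, Jac, grad,
    Finset.sum_apply, mul_comm]

lemma snoc_sum_eq (x : Fin n → ℝ) (α : Fin K → ℝ) (c : ℝ) :
    ∑ i : Fin (K+1), (Fin.snoc α c : Fin (K+1) → ℝ) i • grad n (f i) x
      = (∑ i : Fin K, α i • (grad n (f i.castSucc) x - grad n (f (Fin.last K)) x))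
        + (c + ∑ i, α i) • grad n (f (Fin.last K)) x := by
  rw [Fin.sum_univ_castSucc]
  simp only [Fin.snoc_castSucc, Fin.snoc_last, smul_sub, add_smul]
  rw [Finset.sum_sub_distrib, ← Finset.sum_smul]
  abel

lemma core_ker (hF : Ftilde n K f (x₀, α₀) = 0)
    (hrank : (Jac n (K + 1) f x₀).rank = K)
    (β : Fin (K+1) → ℝ) (hβ : ∑ i, β i • grad n (f i) x₀ = 0) :
    β = (∑ i, β i) • (Fin.snoc α₀ (1 - ∑ i, α₀ i) : Fin (K+1) → ℝ) := by
  set V := (Jac n (K+1) f x₀).transpose.mulVecLin with hV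
  set β₀ : Fin (K+1) → ℝ := (Fin.snoc α₀ (1 - ∑ i, α₀ i) : Fin (K+1) → ℝ) with hβ₀def
  have hsumβ₀ : ∑ i, β₀ i = 1 := by
    rw [Fin.sum_univ_castSucc]
    simp [hβ₀def]
  have hβ₀ne : β₀ ≠ 0 := by
    intro h
    rw [h] at hsumβ₀; simp at hsumβ₀
  have hVβ₀ : V β₀ = 0 := by
    rw [hV, Vapply, Fin.sum_univ_castSucc]
    simp only [hβ₀def, Fin.snoc_castSucc, Fin.snoc_last]
    have h2 := hF
    unfold Ftilde at h2
    simp only [smul_sub] at h2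
    rw [Finset.sum_sub_distrib] at h2
    rw [← Finset.sum_smul] at h2
    rw [sub_smul, one_smul, ← h2]
    abel
  have hker : LinearMap.ker V = Submodule.span ℝ {β₀} := by
    symm
    apply Submodule.eq_of_le_of_finrank_eq
    · rw [Submodule.span_le, Set.singleton_subset_iff]
      exact hVβ₀
    · rw [finrank_span_singleton hβ₀ne]
      have h1 := LinearMap.finrank_range_add_finrank_ker V
      have h2 : Module.finrank ℝ (LinearMap.range V) = K := by
        have := hrank
        rw [← Matrix.rank_transpose] at this
        exact this
      have h3 : Module.finrank ℝ (Fin (K+1) → ℝ) = K + 1 := by simp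
      omega
  have hmem : β ∈ LinearMap.ker V := by
    rw [LinearMap.mem_ker, hV, Vapply]; exact hβ
  rw [hker, Submodule.mem_span_singleton] at hmem
  obtain ⟨t, ht⟩ := hmem
  have hsum : ∑ i, β i = t := by
    rw [← ht]
    simp [← Finset.mul_sum, hsumβ₀]
  rw [hsum, ht]

lemma alpha_unique (hF : Ftilde n K f (x₀, α₀) = 0)
    (hrank : (Jac n (K + 1) f x₀).rank = K)
    (α : Fin K → ℝ) (hα : Ftilde n K f (x₀, α) = 0) : α = α₀ := by
  set β : Fin (K+1) → ℝ := (Fin.snoc α (1 - ∑ i, α i) : Fin (K+1) → ℝ) with hβdef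
  have hsum : ∑ i, β i = 1 := by rw [Fin.sum_univ_castSucc]; simp [hβdef]
  have hβ : ∑ i, β i • grad n (f i) x₀ = 0 := by
    rw [hβdef, snoc_sum_eq, sub_add_cancel, one_smul]
    exact hα
  have h := core_ker hF hrank β hβ
  rw [hsum, one_smul] at h
  funext j
  have := congrFun h j.castSucc
  simpa [hβdef] using this

lemma T_inj (hF : Ftilde n K f (x₀, α₀) = 0)
    (hrank : (Jac n (K + 1) f x₀).rank = K)
    (w : Fin K → ℝ)
    (hw : ∑ i, w i • (grad n (f i.castSucc) x₀ - grad n (f (Fin.last K)) x₀) = 0) :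
    w = 0 := by
  set β : Fin (K+1) → ℝ := (Fin.snoc w (- ∑ i, w i) : Fin (K+1) → ℝ) with hβdef
  have hsum : ∑ i, β i = 0 := by rw [Fin.sum_univ_castSucc]; simp [hβdef]
  have hβ : ∑ i, β i • grad n (f i) x₀ = 0 := by
    rw [hβdef, snoc_sum_eq, neg_add_cancel, zero_smul, add_zero]
    exact hw
  have h := core_ker hF hrank β hβ
  rw [hsum, zero_smul] at h
  funext j
  have := congrFun h j.castSucc
  simpa [hβdef] using this

end aux

/-- at a point `x₀ ∈ P_int` with full-rank Jacobian and invertible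
`D_x F̃(x₀,α₀)`, the tangent cone of `P_int` is contained in the projection of the
tangent space `ker D F̃(x₀,α₀)` of `M`. -/
theorem tangent_cone_subset_proj_tangent_space (n K : ℕ) (hK : 0 < K)
    (f : Fin (K + 1) → (Fin n → ℝ) → ℝ) (hf : ∀ i, ContDiff ℝ 3 (f i))
    (hreg : ∀ p : (Fin n → ℝ) × (Fin K → ℝ),
      p.2 ∈ openSimplex K → Ftilde n K f p = 0 → IsUnit (DxFtilde n K f p))
    (x₀ : Fin n → ℝ) (α₀ : Fin K → ℝ) (hα₀ : α₀ ∈ openSimplex K)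
    (hF : Ftilde n K f (x₀, α₀) = 0)
    (hrank : (Jac n (K + 1) f x₀).rank = K) :
    Tan (ParetoCriticalInt n K f) x₀ ⊆
      (fun q : (Fin n → ℝ) × (Fin K → ℝ) => q.1) ''
        (LinearMap.ker (fderiv ℝ (Ftilde n K f) (x₀, α₀) :
          ((Fin n → ℝ) × (Fin K → ℝ)) →ₗ[ℝ] (Fin n → ℝ)) :
            Set ((Fin n → ℝ) × (Fin K → ℝ))) := by
  classical
  intro v hv
  set p₀ : (Fin n → ℝ) × (Fin K → ℝ) := (x₀, α₀) with hp₀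
  set L : ((Fin n → ℝ) × (Fin K → ℝ)) →L[ℝ] (Fin n → ℝ) :=
    fderiv ℝ (Ftilde n K f) p₀ with hLdef
  by_cases hv0 : v = 0
  · refine ⟨0, ?_, by simp [hv0]⟩
    simp
  rcases hv with rfl | ⟨u, hune, hu0, humem, hudir⟩
  · exact absurd rfl hv0
  -- choose multipliers
  choose α hαs hαF using humem
  -- the multipliers lie in a compact set
  have hball : ∀ i, α i ∈ Metric.closedBall (0 : Fin K → ℝ) 1 := by
    intro i
    rw [Metric.mem_closedBall, dist_zero_right]
    refine (pi_norm_le_iff_of_nonneg zero_le_one).mpr fun j => ?_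
    have h1 := (hαs i).1 j
    have h2 : α i j ≤ ∑ jj, α i jj :=
      Finset.single_le_sum (fun jj _ => ((hαs i).1 jj).le) (Finset.mem_univ j)
    have h3 := (hαs i).2
    rw [Real.norm_eq_abs, abs_le]
    constructor <;> linarith
  obtain ⟨ᾱ, -, φ, hφ, hαconv⟩ :=
    (isCompact_closedBall (0 : Fin K → ℝ) 1).tendsto_subseq hball
  -- the limit multiplier is α₀
  have hFcont : Continuous (Ftilde n K f) := (contDiff_Ftilde hf).continuous
  have huφ : Filter.Tendsto (fun j => u (φ j)) Filter.atTop (nhds 0) :=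
    hu0.comp hφ.tendsto_atTop
  have hᾱ : ᾱ = α₀ := by
    apply alpha_unique hF hrank
    have hptend : Filter.Tendsto (fun j => ((x₀ + u (φ j), α (φ j)) :
        (Fin n → ℝ) × (Fin K → ℝ))) Filter.atTop (nhds (x₀, ᾱ)) := by
      refine Filter.Tendsto.prodMk_nhds ?_ hαconv
      simpa using (tendsto_const_nhds.add huφ)
    have h1 : Filter.Tendsto (fun j => Ftilde n K f (x₀ + u (φ j), α (φ j)))
        Filter.atTop (nhds (Ftilde n K f (x₀, ᾱ))) :=
      (hFcont.tendsto _).comp hptend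
    have h2 : (fun j => Ftilde n K f (x₀ + u (φ j), α (φ j))) = fun _ => 0 := by
      funext j; exact hαF (φ j)
    rw [h2] at h1
    exact (tendsto_nhds_unique tendsto_const_nhds h1).symm
  -- the increment sequence in product space
  set q : ℕ → (Fin n → ℝ) × (Fin K → ℝ) := fun j => (u (φ j), α (φ j) - α₀) with hqdef
  have hq0 : Filter.Tendsto q Filter.atTop (nhds 0) := by
    rw [show ((0 : (Fin n → ℝ) × (Fin K → ℝ))) = (0, ᾱ - α₀) by simp [hᾱ]; rfl]
    exact Filter.Tendsto.prodMk_nhds huφ (hαconv.sub tendsto_const_nhds)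
  have hqne : ∀ j, q j ≠ 0 := by
    intro j h
    exact hune (φ j) (congrArg Prod.fst h)
  have hqnorm : ∀ j, ‖q j‖ ≠ 0 := fun j => norm_ne_zero_iff.mpr (hqne j)
  -- derivative of Ftilde at p₀
  have hdiff : DifferentiableAt ℝ (Ftilde n K f) p₀ :=
    ((contDiff_Ftilde hf).differentiable one_ne_zero) p₀
  have hL : HasFDerivAt (Ftilde n K f) L p₀ := hdiff.hasFDerivAt
  -- little-o estimate along q
  have hlo : (fun j => Ftilde n K f (p₀ + q j) - Ftilde n K f p₀ - L (q j))
      =o[Filter.atTop] fun j => q j :=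
    (hasFDerivAt_iff_isLittleO_nhds_zero.mp hL).comp_tendsto hq0
  have hpq : ∀ j, p₀ + q j = (x₀ + u (φ j), α (φ j)) := by
    intro j
    simp [hp₀, hqdef, Prod.ext_iff]
  have hlo2 : (fun j => -(L (q j))) =o[Filter.atTop] fun j => q j := by
    have : (fun j => Ftilde n K f (p₀ + q j) - Ftilde n K f p₀ - L (q j))
        = fun j => -(L (q j)) := by
      funext j
      rw [hpq j, hαF (φ j), hp₀, hF]
      simp
    rwa [this] at hlo
  -- normalized sequence
  set sq : ℕ → (Fin n → ℝ) × (Fin K → ℝ) := fun j => ‖q j‖⁻¹ • q j with hsqdef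
  have hsq_sphere : ∀ j, sq j ∈ Metric.sphere (0 : (Fin n → ℝ) × (Fin K → ℝ)) 1 := by
    intro j
    rw [Metric.mem_sphere, dist_zero_right, hsqdef]
    rw [norm_smul, norm_inv, norm_norm, inv_mul_cancel₀ (hqnorm j)]
  have hLsq : Filter.Tendsto (fun j => L (sq j)) Filter.atTop (nhds 0) := by
    rw [NormedAddCommGroup.tendsto_nhds_zero]
    intro ε hε
    filter_upwards [hlo2.def (half_pos hε)] with j hj
    rw [norm_neg] at hj
    have : ‖L (sq j)‖ = ‖q j‖⁻¹ * ‖L (q j)‖ := by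
      rw [hsqdef]
      simp only [map_smul, norm_smul, norm_inv, norm_norm]
    rw [this]
    calc ‖q j‖⁻¹ * ‖L (q j)‖ ≤ ‖q j‖⁻¹ * (ε / 2 * ‖q j‖) := by
          apply mul_le_mul_of_nonneg_left hj (by positivity)
      _ = ε / 2 := by
          rw [mul_comm (ε / 2) ‖q j‖, ← mul_assoc, inv_mul_cancel₀ (hqnorm j), one_mul]
      _ < ε := half_lt_self hε
  obtain ⟨ab, habmem, ψ, hψ, hsconv⟩ :=
    (isCompact_sphere (0 : (Fin n → ℝ) × (Fin K → ℝ)) 1).tendsto_subseq hsq_sphere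
  have habnorm : ‖ab‖ = 1 := by
    rw [Metric.mem_sphere, dist_zero_right] at habmem; exact habmem
  -- L ab = 0
  have hLab : L ab = 0 := by
    have h1 : Filter.Tendsto (fun j => L (sq (ψ j))) Filter.atTop (nhds (L ab)) :=
      (L.continuous.tendsto _).comp hsconv
    have h2 : Filter.Tendsto (fun j => L (sq (ψ j))) Filter.atTop (nhds 0) :=
      hLsq.comp hψ.tendsto_atTop
    exact tendsto_nhds_unique h1 h2
  obtain ⟨a, b⟩ := ab
  -- first component limit: a = ‖a‖ • (‖v‖⁻¹ • v)
  have hfst : Filter.Tendsto (fun j => (sq (ψ j)).1) Filter.atTop (nhds a) :=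
    (continuous_fst.tendsto _).comp hsconv
  have hra : Filter.Tendsto (fun j => ‖(sq (ψ j)).1‖) Filter.atTop (nhds ‖a‖) :=
    (continuous_norm.tendsto _).comp hfst
  have hsq1 : ∀ j, (sq j).1 = ‖(sq j).1‖ • (‖u (φ j)‖⁻¹ • u (φ j)) := by
    intro j
    have hun : ‖u (φ j)‖ ≠ 0 := norm_ne_zero_iff.mpr (hune (φ j))
    have h1 : (sq j).1 = ‖q j‖⁻¹ • u (φ j) := rfl
    have h2 : ‖(sq j).1‖ = ‖q j‖⁻¹ * ‖u (φ j)‖ := by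
      rw [h1, norm_smul, norm_inv, norm_norm]
    rw [h2, h1, smul_smul]
    rw [mul_assoc, mul_inv_cancel₀ hun, mul_one]
  have hudir2 : Filter.Tendsto (fun j => ‖u (φ (ψ j))‖⁻¹ • u (φ (ψ j)))
      Filter.atTop (nhds (‖v‖⁻¹ • v)) :=
    hudir.comp ((hφ.comp hψ).tendsto_atTop)
  have ha_eq : a = ‖a‖ • (‖v‖⁻¹ • v) := by
    have h1 : Filter.Tendsto (fun j => ‖(sq (ψ j)).1‖ • (‖u (φ (ψ j))‖⁻¹ • u (φ (ψ j))))
        Filter.atTop (nhds (‖a‖ • (‖v‖⁻¹ • v))) := hra.smul hudir2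
    have h2 : (fun j => ‖(sq (ψ j)).1‖ • (‖u (φ (ψ j))‖⁻¹ • u (φ (ψ j))))
        = fun j => (sq (ψ j)).1 := by
      funext j; exact (hsq1 (ψ j)).symm
    rw [h2] at h1
    exact tendsto_nhds_unique hfst h1
  -- compute L ∘ inr
  set d : Fin K → Fin n → ℝ :=
    fun i => grad n (f i.castSucc) x₀ - grad n (f (Fin.last K)) x₀ with hddef
  have hTder : HasFDerivAt (fun β : Fin K → ℝ => Ftilde n K f (x₀, β)) (Tmap d) α₀ := by
    have := hasFDerivAt_affine d (grad n (f (Fin.last K)) x₀) α₀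
    convert this using 1
    rfl
  have hcompder : HasFDerivAt (fun β : Fin K → ℝ => Ftilde n K f (x₀, β))
      (L.comp (ContinuousLinearMap.inr ℝ (Fin n → ℝ) (Fin K → ℝ))) α₀ :=
    HasFDerivAt.comp α₀ hL (hasFDerivAt_prodMk_right x₀ α₀)
  have hLinr : ∀ w : Fin K → ℝ, L (0, w) = ∑ i, w i • d i := by
    intro w
    have h := hcompder.unique hTder
    have h2 := congrFun (congrArg (fun (T : (Fin K → ℝ) →L[ℝ] (Fin n → ℝ)) =>
      (T : (Fin K → ℝ) → (Fin n → ℝ))) h) w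
    simp only [ContinuousLinearMap.comp_apply, ContinuousLinearMap.inr_apply] at h2
    rw [h2, Tmap_apply]
  -- case analysis on ‖a‖
  have hLab' : L (a, b) = 0 := hLab
  by_cases hA : a = 0
  · -- degenerate case: contradicts injectivity
    exfalso
    have hb : ∑ i, b i • d i = 0 := by
      rw [← hLinr b]
      rw [hA] at hLab'
      exact hLab'
    have hb0 : b = 0 := T_inj hF hrank b hb
    rw [hA, hb0] at habnorm
    simp at habnorm
  · -- main case: scale (a, b) to have first component v
    have hanorm : ‖a‖ ≠ 0 := norm_ne_zero_iff.mpr hA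
    set c : ℝ := ‖v‖ / ‖a‖ with hcdef
    have hva : v = c • a := by
      rw [ha_eq, hcdef, smul_smul, smul_smul]
      rw [div_mul_eq_mul_div, mul_comm, mul_div_assoc, div_self hanorm, mul_one]
      rw [inv_mul_cancel₀ (norm_ne_zero_iff.mpr hv0), one_smul]
    refine ⟨(v, c • b), ?_, rfl⟩
    simp only [SetLike.mem_coe, LinearMap.mem_ker, ContinuousLinearMap.coe_coe]
    have : ((v, c • b) : (Fin n → ℝ) × (Fin K → ℝ)) = c • (a, b) := by
      rw [Prod.smul_mk, ← hva]
    rw [this, map_smul, hLab', smul_zero]
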